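/- (The explicit generators realize the Poincaré algebra.) Fix κ > 0 and define on Γ the ten functions P_0, P_a, J_ab, J_a0 (a,b ∈ {1,2,3}) as in the context, extended to an antisymmetric family J_{μν} (μ,ν ∈ {0,1,2,3}) by J_{0a} := −J_{a0} and J_{μμ} := 0. Then with η = diag(−1,1,1,1) these functions satisfy the Poisson bracket relations of the Poincaré algebra: {P_μ, P_ν} = 0; {J_{μν}, P_ρ} = η_{μρ}P_ν − η_{νρ}P_μ; and {J_{μν}, J_{ρσ}} = η_{μρ}J_{νσ} − η_{νρ}J_{μσ} − η_{μσ}J_{νρ} + η_{νσ}J_{μρ}, for all μ,ν,ρ,σ ∈ {0,1,2,3}. -/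

import Mathlib

noncomputable section

open Finset

abbrev R3 := Fin 3 → ℝ

/-- The spin phase space Γ = ℝ³ × ℝ³ × ℝ³ with points (x, p, s). -/
abbrev Phase := R3 × R3 × R3

/-- Euclidean dot product on ℝ³. -/
def dot3 (v w : R3) : ℝ := ∑ a, v a * w a

/-- Euclidean norm on ℝ³. -/
def norm3 (v : R3) : ℝ := Real.sqrt (dot3 v v)

/-- Cross product on ℝ³. -/
def cross3 (v w : R3) : R3 :=
  ![v 1 * w 2 - v 2 * w 1, v 2 * w 0 - v 0 * w 2, v 0 * w 1 - v 1 * w 0]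

/-- Kronecker delta. -/
def kdelta (a b : Fin 3) : ℝ := if a = b then 1 else 0

/-- Sign of an integer, valued in ℝ. -/
def isgn (x : ℤ) : ℝ := if 0 < x then 1 else if x < 0 then -1 else 0

/-- Totally antisymmetric symbol on three indices with ε₀₁₂ = +1. -/
def eps3 (a b c : Fin 3) : ℝ :=
  isgn (((b : ℕ) : ℤ) - ((a : ℕ) : ℤ)) * isgn (((c : ℕ) : ℤ) - ((a : ℕ) : ℤ)) *
  isgn (((c : ℕ) : ℤ) - ((b : ℕ) : ℤ))

/-- Gradient of f with respect to x. -/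
def dX (f : Phase → ℝ) (γ : Phase) : R3 := fun a => fderiv ℝ f γ (Pi.single a 1, 0, 0)

/-- Gradient of f with respect to p. -/
def dP (f : Phase → ℝ) (γ : Phase) : R3 := fun a => fderiv ℝ f γ (0, Pi.single a 1, 0)

/-- Gradient of f with respect to s. -/
def dS (f : Phase → ℝ) (γ : Phase) : R3 := fun a => fderiv ℝ f γ (0, 0, Pi.single a 1)

/-- Poisson bracket {f,g} = ∇ₓf·∇ₚg − ∇ₚf·∇ₓg + s·(∇ₛf × ∇ₛg) on Γ. -/
def pb (f g : Phase → ℝ) (γ : Phase) : ℝ :=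
  dot3 (dX f γ) (dP g γ) - dot3 (dP f γ) (dX g γ)
    + dot3 γ.2.2 (cross3 (dS f γ) (dS g γ))

/-- Generator of spatial translations: P_a(x,p,s) = p_a. -/
def Pgen (a : Fin 3) : Phase → ℝ := fun γ => γ.2.1 a

/-- Generator of rotations: J_ab(x,p,s) = x_a p_b − x_b p_a + ε_{abc} s_c. -/
def Jgen (a b : Fin 3) : Phase → ℝ :=
  fun γ => γ.1 a * γ.2.1 b - γ.1 b * γ.2.1 a + ∑ c, eps3 a b c * γ.2.2 c

/-- Generator of time translations: P₀(x,p,s) = −√(κ² + |p|²). -/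
def P0gen (κ : ℝ) : Phase → ℝ := fun γ => -Real.sqrt (κ ^ 2 + dot3 γ.2.1 γ.2.1)

/-- Generator of boosts: J_{a0}(x,p,s) = P₀ x_a − (p × s)_a/(κ − P₀). -/
def Jboost (κ : ℝ) (a : Fin 3) : Phase → ℝ :=
  fun γ => P0gen κ γ * γ.1 a - cross3 γ.2.1 γ.2.2 a / (κ - P0gen κ γ)

/-- The four translation generators (P₀, P₁, P₂, P₃). -/
def P4 (κ : ℝ) : Fin 4 → Phase → ℝ :=
  ![P0gen κ, Pgen 0, Pgen 1, Pgen 2]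

/-- The antisymmetric family J_{μν} of Lorentz generators, with J_{0a} = −J_{a0}
and vanishing diagonal. -/
def J4 (κ : ℝ) : Fin 4 → Fin 4 → Phase → ℝ :=
  ![![fun _ => 0, fun γ => -Jboost κ 0 γ, fun γ => -Jboost κ 1 γ, fun γ => -Jboost κ 2 γ],
    ![Jboost κ 0, fun _ => 0, Jgen 0 1, Jgen 0 2],
    ![Jboost κ 1, Jgen 1 0, fun _ => 0, Jgen 1 2],
    ![Jboost κ 2, Jgen 2 0, Jgen 2 1, fun _ => 0]]

/-- Minkowski metric η = diag(−1,1,1,1). -/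
def eta4 (μ ν : Fin 4) : ℝ := if μ = ν then (if μ = 0 then -1 else 1) else 0


/-! ### Auxiliary infrastructure -/

@[simp] lemma eps3_000 : eps3 0 0 0 = 0 := by norm_num [eps3, isgn]
@[simp] lemma eps3_001 : eps3 0 0 1 = 0 := by norm_num [eps3, isgn]
@[simp] lemma eps3_002 : eps3 0 0 2 = 0 := by norm_num [eps3, isgn]
@[simp] lemma eps3_010 : eps3 0 1 0 = 0 := by norm_num [eps3, isgn]
@[simp] lemma eps3_011 : eps3 0 1 1 = 0 := by norm_num [eps3, isgn]
@[simp] lemma eps3_012 : eps3 0 1 2 = 1 := by norm_num [eps3, isgn]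
@[simp] lemma eps3_020 : eps3 0 2 0 = 0 := by norm_num [eps3, isgn]
@[simp] lemma eps3_021 : eps3 0 2 1 = -1 := by norm_num [eps3, isgn]
@[simp] lemma eps3_022 : eps3 0 2 2 = 0 := by norm_num [eps3, isgn]
@[simp] lemma eps3_100 : eps3 1 0 0 = 0 := by norm_num [eps3, isgn]
@[simp] lemma eps3_101 : eps3 1 0 1 = 0 := by norm_num [eps3, isgn]
@[simp] lemma eps3_102 : eps3 1 0 2 = -1 := by norm_num [eps3, isgn]
@[simp] lemma eps3_110 : eps3 1 1 0 = 0 := by norm_num [eps3, isgn]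
@[simp] lemma eps3_111 : eps3 1 1 1 = 0 := by norm_num [eps3, isgn]
@[simp] lemma eps3_112 : eps3 1 1 2 = 0 := by norm_num [eps3, isgn]
@[simp] lemma eps3_120 : eps3 1 2 0 = 1 := by norm_num [eps3, isgn]
@[simp] lemma eps3_121 : eps3 1 2 1 = 0 := by norm_num [eps3, isgn]
@[simp] lemma eps3_122 : eps3 1 2 2 = 0 := by norm_num [eps3, isgn]
@[simp] lemma eps3_200 : eps3 2 0 0 = 0 := by norm_num [eps3, isgn]
@[simp] lemma eps3_201 : eps3 2 0 1 = 1 := by norm_num [eps3, isgn]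
@[simp] lemma eps3_202 : eps3 2 0 2 = 0 := by norm_num [eps3, isgn]
@[simp] lemma eps3_210 : eps3 2 1 0 = -1 := by norm_num [eps3, isgn]
@[simp] lemma eps3_211 : eps3 2 1 1 = 0 := by norm_num [eps3, isgn]
@[simp] lemma eps3_212 : eps3 2 1 2 = 0 := by norm_num [eps3, isgn]
@[simp] lemma eps3_220 : eps3 2 2 0 = 0 := by norm_num [eps3, isgn]
@[simp] lemma eps3_221 : eps3 2 2 1 = 0 := by norm_num [eps3, isgn]
@[simp] lemma eps3_222 : eps3 2 2 2 = 0 := by norm_num [eps3, isgn]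


def LX (a : Fin 3) : Phase →L[ℝ] ℝ :=
  (ContinuousLinearMap.proj a).comp (ContinuousLinearMap.fst ℝ R3 (R3 × R3))
def LP (a : Fin 3) : Phase →L[ℝ] ℝ :=
  (ContinuousLinearMap.proj a).comp ((ContinuousLinearMap.fst ℝ R3 R3).comp
    (ContinuousLinearMap.snd ℝ R3 (R3 × R3)))
def LS (a : Fin 3) : Phase →L[ℝ] ℝ :=
  (ContinuousLinearMap.proj a).comp ((ContinuousLinearMap.snd ℝ R3 R3).comp
    (ContinuousLinearMap.snd ℝ R3 (R3 × R3)))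

@[simp] lemma LX_apply (a : Fin 3) (v : Phase) : LX a v = v.1 a := rfl
@[simp] lemma LP_apply (a : Fin 3) (v : Phase) : LP a v = v.2.1 a := rfl
@[simp] lemma LS_apply (a : Fin 3) (v : Phase) : LS a v = v.2.2 a := rfl

lemma hasPgen (a : Fin 3) (γ : Phase) : HasFDerivAt (Pgen a) (LP a) γ :=
  (LP a).hasFDerivAt

lemma hasX (a : Fin 3) (γ : Phase) : HasFDerivAt (fun γ : Phase => γ.1 a) (LX a) γ :=
  (LX a).hasFDerivAt
lemma hasP (a : Fin 3) (γ : Phase) : HasFDerivAt (fun γ : Phase => γ.2.1 a) (LP a) γ :=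
  (LP a).hasFDerivAt
lemma hasS (a : Fin 3) (γ : Phase) : HasFDerivAt (fun γ : Phase => γ.2.2 a) (LS a) γ :=
  (LS a).hasFDerivAt

/-- The energy function E = √(κ² + |p|²). -/
def Ee (κ : ℝ) (γ : Phase) : ℝ := Real.sqrt (κ ^ 2 + dot3 γ.2.1 γ.2.1)

lemma dot3_self_nonneg (v : R3) : 0 ≤ dot3 v v :=
  Finset.sum_nonneg fun a _ => mul_self_nonneg _

lemma q_pos {κ : ℝ} (hκ : 0 < κ) (γ : Phase) : 0 < κ ^ 2 + dot3 γ.2.1 γ.2.1 :=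
  add_pos_of_pos_of_nonneg (by positivity) (dot3_self_nonneg _)

lemma Ee_pos {κ : ℝ} (hκ : 0 < κ) (γ : Phase) : 0 < Ee κ γ :=
  Real.sqrt_pos.2 (q_pos hκ γ)

lemma Ee_sq {κ : ℝ} (hκ : 0 < κ) (γ : Phase) : Ee κ γ ^ 2 = κ ^ 2 + dot3 γ.2.1 γ.2.1 :=
  Real.sq_sqrt (q_pos hκ γ).le

lemma D_pos {κ : ℝ} (hκ : 0 < κ) (γ : Phase) : 0 < κ + Ee κ γ :=
  add_pos hκ (Ee_pos hκ γ)

lemma P0gen_eq (κ : ℝ) (γ : Phase) : P0gen κ γ = -Ee κ γ := rfl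

lemma hasF_q {κ : ℝ} (γ : Phase) :
    HasFDerivAt (fun γ : Phase => κ ^ 2 + dot3 γ.2.1 γ.2.1)
      (∑ a, ((2 : ℝ) * γ.2.1 a) • LP a) γ := by
  have h1 : HasFDerivAt (fun γ : Phase => ∑ a, γ.2.1 a * γ.2.1 a)
      (∑ a : Fin 3, ((γ.2.1 a) • LP a + (γ.2.1 a) • LP a)) γ :=
    HasFDerivAt.fun_sum fun a _ => (hasP a γ).mul (hasP a γ)
  have h2 : HasFDerivAt (fun γ : Phase => κ ^ 2 + dot3 γ.2.1 γ.2.1)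
      (0 + ∑ a : Fin 3, ((γ.2.1 a) • LP a + (γ.2.1 a) • LP a)) γ := by
    exact (hasFDerivAt_const (κ ^ 2) γ).add h1
  convert h2 using 1
  rw [zero_add]
  refine Finset.sum_congr rfl fun a _ => ?_
  rw [two_mul, add_smul]

lemma hasF_P0 {κ : ℝ} (hκ : 0 < κ) (γ : Phase) :
    HasFDerivAt (P0gen κ)
      (-((1 / (2 * Ee κ γ)) • (∑ a, ((2 : ℝ) * γ.2.1 a) • LP a))) γ :=
  ((hasF_q γ).sqrt (q_pos hκ γ).ne').neg

lemma hasF_D {κ : ℝ} (hκ : 0 < κ) (γ : Phase) :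
    HasFDerivAt (fun γ : Phase => κ - P0gen κ γ)
      ((0 : Phase →L[ℝ] ℝ) - -((1 / (2 * Ee κ γ)) • (∑ a, ((2 : ℝ) * γ.2.1 a) • LP a))) γ :=
  (hasFDerivAt_const κ γ).sub (hasF_P0 hκ γ)

lemma D_ne {κ : ℝ} (hκ : 0 < κ) (γ : Phase) : κ - P0gen κ γ ≠ 0 := by
  rw [P0gen_eq, sub_neg_eq_add]; exact (D_pos hκ γ).ne'

lemma cross3_eq_sum (v w : R3) (a : Fin 3) :
    cross3 v w a = ∑ b, ∑ c, eps3 a b c * (v b * w c) := by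
  fin_cases a <;> simp [cross3, Fin.sum_univ_three] <;> ring

/-! ### Gradients of the generators -/

lemma dX_Pgen (a : Fin 3) (γ : Phase) : dX (Pgen a) γ = fun _ => 0 := by
  funext e; simp only [dX, (hasPgen a γ).fderiv]; simp

lemma dP_Pgen (a : Fin 3) (γ : Phase) :
    dP (Pgen a) γ = fun e => if a = e then 1 else 0 := by
  funext e; simp only [dP, (hasPgen a γ).fderiv]; simp [Pi.single_apply]

lemma dS_Pgen (a : Fin 3) (γ : Phase) : dS (Pgen a) γ = fun _ => 0 := by
  funext e; simp only [dS, (hasPgen a γ).fderiv]; simp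

lemma hasF_P0' {κ : ℝ} (hκ : 0 < κ) (γ : Phase) :
    fderiv ℝ (P0gen κ) γ
      = -((1 / (2 * Ee κ γ)) • (∑ a, ((2 : ℝ) * γ.2.1 a) • LP a)) :=
  (hasF_P0 hκ γ).fderiv

lemma dX_P0 {κ : ℝ} (hκ : 0 < κ) (γ : Phase) : dX (P0gen κ) γ = fun _ => 0 := by
  funext e; simp only [dX, hasF_P0' hκ γ]; simp

lemma dP_P0 {κ : ℝ} (hκ : 0 < κ) (γ : Phase) :
    dP (P0gen κ) γ = fun e => -(γ.2.1 e / Ee κ γ) := by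
  have hE := (Ee_pos hκ γ).ne'
  funext e; simp only [dP, hasF_P0' hκ γ]
  simp [ContinuousLinearMap.sum_apply, Pi.single_apply, mul_ite, Finset.sum_ite_eq,
    Finset.sum_ite_eq']
  field_simp

lemma dS_P0 {κ : ℝ} (hκ : 0 < κ) (γ : Phase) : dS (P0gen κ) γ = fun _ => 0 := by
  funext e; simp only [dS, hasF_P0' hκ γ]; simp

lemma hasF_Jgen (a b : Fin 3) (γ : Phase) :
    HasFDerivAt (Jgen a b)
      ((((γ.1 a) • LP b + (γ.2.1 b) • LX a) - ((γ.1 b) • LP a + (γ.2.1 a) • LX b))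
        + ∑ c, eps3 a b c • LS c) γ := by
  exact (((hasX a γ).mul (hasP b γ)).sub ((hasX b γ).mul (hasP a γ))).add
    (HasFDerivAt.fun_sum fun c _ => (hasS c γ).const_mul (eps3 a b c))

lemma dX_Jgen (a b : Fin 3) (γ : Phase) :
    dX (Jgen a b) γ
      = fun e => (if a = e then 1 else 0) * γ.2.1 b - (if b = e then 1 else 0) * γ.2.1 a := by
  funext e; simp only [dX, (hasF_Jgen a b γ).fderiv]
  simp [ContinuousLinearMap.sum_apply, Pi.single_apply]

lemma dP_Jgen (a b : Fin 3) (γ : Phase) :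
    dP (Jgen a b) γ
      = fun e => (if b = e then 1 else 0) * γ.1 a - (if a = e then 1 else 0) * γ.1 b := by
  funext e; simp only [dP, (hasF_Jgen a b γ).fderiv]
  simp [ContinuousLinearMap.sum_apply, Pi.single_apply]

lemma dS_Jgen (a b : Fin 3) (γ : Phase) :
    dS (Jgen a b) γ = fun e => eps3 a b e := by
  funext e; simp only [dS, (hasF_Jgen a b γ).fderiv]
  simp [ContinuousLinearMap.sum_apply, Pi.single_apply, mul_ite, Finset.sum_ite_eq,
    Finset.sum_ite_eq']



lemma hasF_N (a : Fin 3) (γ : Phase) :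
    HasFDerivAt (fun γ : Phase => cross3 γ.2.1 γ.2.2 a)
      (∑ b, ∑ c, eps3 a b c • ((γ.2.1 b) • LS c + (γ.2.2 c) • LP b)) γ := by
  have key : (fun γ : Phase => cross3 γ.2.1 γ.2.2 a)
      = fun γ : Phase => ∑ b, ∑ c, eps3 a b c * (γ.2.1 b * γ.2.2 c) :=
    funext fun γ => cross3_eq_sum _ _ a
  rw [key]
  exact HasFDerivAt.fun_sum fun b _ => HasFDerivAt.fun_sum fun c _ =>
    ((hasP b γ).mul (hasS c γ)).const_mul (eps3 a b c)

lemma hasF_inv {κ : ℝ} (hκ : 0 < κ) (γ : Phase) :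
    HasFDerivAt (fun γ : Phase => (κ - P0gen κ γ)⁻¹)
      ((-((κ - P0gen κ γ) ^ 2)⁻¹) •
        ((0 : Phase →L[ℝ] ℝ) - -((1 / (2 * Ee κ γ)) • ∑ a, ((2 : ℝ) * γ.2.1 a) • LP a))) γ :=
  (hasDerivAt_inv (D_ne hκ γ)).comp_hasFDerivAt γ (hasF_D hκ γ)

lemma hasF_Jb {κ : ℝ} (hκ : 0 < κ) (a : Fin 3) (γ : Phase) :
    HasFDerivAt (Jboost κ a)
      (((P0gen κ γ) • LX a
          + (γ.1 a) • (-((1 / (2 * Ee κ γ)) • ∑ a', ((2 : ℝ) * γ.2.1 a') • LP a')))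
        - ((cross3 γ.2.1 γ.2.2 a) •
            ((-((κ - P0gen κ γ) ^ 2)⁻¹) •
              ((0 : Phase →L[ℝ] ℝ)
                - -((1 / (2 * Ee κ γ)) • ∑ a', ((2 : ℝ) * γ.2.1 a') • LP a')))
          + ((κ - P0gen κ γ)⁻¹) •
              (∑ b, ∑ c, eps3 a b c • ((γ.2.1 b) • LS c + (γ.2.2 c) • LP b)))) γ := by
  have hfun : Jboost κ a = fun γ : Phase =>
      P0gen κ γ * γ.1 a - cross3 γ.2.1 γ.2.2 a * (κ - P0gen κ γ)⁻¹ := by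
    funext y; simp only [Jboost, div_eq_mul_inv]
  rw [hfun]
  exact ((hasF_P0 hκ γ).mul (hasX a γ)).sub ((hasF_N a γ).mul (hasF_inv hκ γ))

lemma dX_Jb {κ : ℝ} (hκ : 0 < κ) (a : Fin 3) (γ : Phase) :
    dX (Jboost κ a) γ = fun e => if a = e then -Ee κ γ else 0 := by
  funext e
  simp only [dX, (hasF_Jb hκ a γ).fderiv]
  simp [ContinuousLinearMap.sum_apply, Pi.single_apply, P0gen_eq]

lemma dP_Jb {κ : ℝ} (hκ : 0 < κ) (a : Fin 3) (γ : Phase) :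
    dP (Jboost κ a) γ = fun e =>
      -(γ.2.1 e / Ee κ γ) * γ.1 a
        - ((∑ c, eps3 a e c * γ.2.2 c) * (κ + Ee κ γ)
            - cross3 γ.2.1 γ.2.2 a * (γ.2.1 e / Ee κ γ)) / (κ + Ee κ γ) ^ 2 := by
  have hE := (Ee_pos hκ γ).ne'
  have hD := (D_pos hκ γ).ne'
  funext e
  simp only [dP, (hasF_Jb hκ a γ).fderiv]
  simp only [ContinuousLinearMap.sub_apply, ContinuousLinearMap.add_apply,
    ContinuousLinearMap.smul_apply, ContinuousLinearMap.neg_apply,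
    ContinuousLinearMap.coe_sum', Finset.sum_apply,
    ContinuousLinearMap.zero_apply, smul_eq_mul, LX_apply, LP_apply, LS_apply]
  simp only [Pi.single_apply, Pi.zero_apply]
  fin_cases a <;> fin_cases e <;>
    simp [P0gen_eq, sub_neg_eq_add, Fin.sum_univ_three, cross3] <;>
    (try field_simp) <;> (try ring)

lemma dS_Jb {κ : ℝ} (hκ : 0 < κ) (a : Fin 3) (γ : Phase) :
    dS (Jboost κ a) γ = fun e => -(∑ b, eps3 a b e * γ.2.1 b) / (κ + Ee κ γ) := by
  have hE := (Ee_pos hκ γ).ne'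
  have hD := (D_pos hκ γ).ne'
  funext e
  simp only [dS, (hasF_Jb hκ a γ).fderiv]
  simp only [ContinuousLinearMap.sub_apply, ContinuousLinearMap.add_apply,
    ContinuousLinearMap.smul_apply, ContinuousLinearMap.neg_apply,
    ContinuousLinearMap.coe_sum', Finset.sum_apply,
    ContinuousLinearMap.zero_apply, smul_eq_mul, LX_apply, LP_apply, LS_apply]
  simp only [Pi.single_apply, Pi.zero_apply]
  fin_cases a <;> fin_cases e <;>
    simp [P0gen_eq, sub_neg_eq_add, Fin.sum_univ_three, cross3] <;>
    (try field_simp) <;> (try ring)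


/-! ### Bracket component lemmas -/

lemma pb_antisymm (f g : Phase → ℝ) (γ : Phase) : pb g f γ = -pb f g γ := by
  simp only [pb, dot3, cross3, Fin.sum_univ_three]
  simp only [Matrix.cons_val_zero, Matrix.cons_val_one, Matrix.head_cons, Matrix.cons_val_two,
    Matrix.tail_cons]
  ring

lemma pb_zero_left (g : Phase → ℝ) (γ : Phase) : pb (fun _ => (0 : ℝ)) g γ = 0 := by
  simp [pb, dX, dP, dS, dot3, cross3, Fin.sum_univ_three]

lemma pb_zero_right (f : Phase → ℝ) (γ : Phase) : pb f (fun _ => (0 : ℝ)) γ = 0 := by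
  rw [pb_antisymm, pb_zero_left, neg_zero]

lemma pb_neg_left (f g : Phase → ℝ) (γ : Phase) :
    pb (fun γ => -f γ) g γ = -pb f g γ := by
  have hd : ∀ v, fderiv ℝ (fun γ : Phase => -f γ) γ v = -fderiv ℝ f γ v := by
    intro v; rw [fderiv_fun_neg]; simp
  simp only [pb, dX, dP, dS, dot3, cross3, Fin.sum_univ_three, hd]
  simp only [Matrix.cons_val_zero, Matrix.cons_val_one, Matrix.head_cons, Matrix.cons_val_two,
    Matrix.tail_cons]
  ring

lemma pb_neg_right (f g : Phase → ℝ) (γ : Phase) :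
    pb f (fun γ => -g γ) γ = -pb f g γ := by
  rw [pb_antisymm, pb_neg_left, pb_antisymm f g, neg_neg]

lemma pb_P_P (a b : Fin 3) (γ : Phase) : pb (Pgen a) (Pgen b) γ = 0 := by
  simp [pb, dot3, cross3, Fin.sum_univ_three, dX_Pgen, dP_Pgen, dS_Pgen]

lemma pb_P0_P {κ : ℝ} (hκ : 0 < κ) (a : Fin 3) (γ : Phase) :
    pb (P0gen κ) (Pgen a) γ = 0 := by
  simp [pb, dot3, cross3, Fin.sum_univ_three, dX_Pgen, dP_Pgen, dS_Pgen,
    dX_P0 hκ, dP_P0 hκ, dS_P0 hκ]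

lemma pb_P_P0 {κ : ℝ} (hκ : 0 < κ) (a : Fin 3) (γ : Phase) :
    pb (Pgen a) (P0gen κ) γ = 0 := by
  rw [pb_antisymm, pb_P0_P hκ, neg_zero]

lemma pb_P0_P0 {κ : ℝ} (γ : Phase) : pb (P0gen κ) (P0gen κ) γ = 0 := by
  have := pb_antisymm (P0gen κ) (P0gen κ) γ; linarith

lemma pb_J_P (a b c : Fin 3) (γ : Phase) :
    pb (Jgen a b) (Pgen c) γ
      = (if a = c then 1 else 0) * Pgen b γ - (if b = c then 1 else 0) * Pgen a γ := by
  fin_cases a <;> fin_cases b <;> fin_cases c <;>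
    simp [pb, dot3, cross3, Fin.sum_univ_three, dX_Pgen, dP_Pgen, dS_Pgen,
      dX_Jgen, dP_Jgen, dS_Jgen, Pgen] <;> ring

lemma pb_P_J (c a b : Fin 3) (γ : Phase) :
    pb (Pgen c) (Jgen a b) γ
      = -((if a = c then 1 else 0) * Pgen b γ - (if b = c then 1 else 0) * Pgen a γ) := by
  rw [pb_antisymm, pb_J_P]

lemma pb_J_P0 {κ : ℝ} (hκ : 0 < κ) (a b : Fin 3) (γ : Phase) :
    pb (Jgen a b) (P0gen κ) γ = 0 := by
  have hE := (Ee_pos hκ γ).ne'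
  fin_cases a <;> fin_cases b <;>
    simp [pb, dot3, cross3, Fin.sum_univ_three, dX_Jgen, dP_Jgen, dS_Jgen,
      dX_P0 hκ, dP_P0 hκ, dS_P0 hκ] <;> (try field_simp) <;> (try ring)

lemma pb_P0_J {κ : ℝ} (hκ : 0 < κ) (a b : Fin 3) (γ : Phase) :
    pb (P0gen κ) (Jgen a b) γ = 0 := by
  rw [pb_antisymm, pb_J_P0 hκ, neg_zero]

lemma pb_Jb_P {κ : ℝ} (hκ : 0 < κ) (a b : Fin 3) (γ : Phase) :
    pb (Jboost κ a) (Pgen b) γ = (if a = b then 1 else 0) * P0gen κ γ := by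
  fin_cases a <;> fin_cases b <;>
    simp [pb, dot3, cross3, Fin.sum_univ_three, dX_Pgen, dP_Pgen, dS_Pgen,
      dX_Jb hκ, dP_Jb hκ, dS_Jb hκ, P0gen_eq] <;> (try field_simp) <;> (try ring)

lemma pb_P_Jb {κ : ℝ} (hκ : 0 < κ) (b a : Fin 3) (γ : Phase) :
    pb (Pgen b) (Jboost κ a) γ = -((if a = b then 1 else 0) * P0gen κ γ) := by
  rw [pb_antisymm, pb_Jb_P hκ]

lemma pb_Jb_P0 {κ : ℝ} (hκ : 0 < κ) (a : Fin 3) (γ : Phase) :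
    pb (Jboost κ a) (P0gen κ) γ = Pgen a γ := by
  have hE := (Ee_pos hκ γ).ne'
  fin_cases a <;>
    simp [pb, dot3, cross3, Fin.sum_univ_three, dX_Jb hκ, dP_Jb hκ, dS_Jb hκ,
      dX_P0 hκ, dP_P0 hκ, dS_P0 hκ, Pgen, P0gen_eq] <;> (try field_simp) <;> (try ring)

lemma pb_P0_Jb {κ : ℝ} (hκ : 0 < κ) (a : Fin 3) (γ : Phase) :
    pb (P0gen κ) (Jboost κ a) γ = -Pgen a γ := by
  rw [pb_antisymm, pb_Jb_P0 hκ]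

set_option maxHeartbeats 2000000 in
lemma pb_J_J (a b c d : Fin 3) (γ : Phase) :
    pb (Jgen a b) (Jgen c d) γ
      = (if a = c then 1 else 0) * Jgen b d γ - (if b = c then 1 else 0) * Jgen a d γ
        - (if a = d then 1 else 0) * Jgen b c γ + (if b = d then 1 else 0) * Jgen a c γ := by
  fin_cases a <;> fin_cases b <;> fin_cases c <;> fin_cases d <;>
    simp [pb, dot3, cross3, Fin.sum_univ_three, dX_Jgen, dP_Jgen, dS_Jgen, Jgen] <;>
    (try ring)

set_option maxHeartbeats 2000000 in
lemma pb_J_Jb {κ : ℝ} (hκ : 0 < κ) (a b c : Fin 3) (γ : Phase) :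
    pb (Jgen a b) (Jboost κ c) γ
      = (if a = c then 1 else 0) * Jboost κ b γ - (if b = c then 1 else 0) * Jboost κ a γ := by
  have hE := (Ee_pos hκ γ).ne'
  have hD := (D_pos hκ γ).ne'
  fin_cases a <;> fin_cases b <;> fin_cases c <;>
    simp [pb, dot3, cross3, Fin.sum_univ_three, dX_Jgen, dP_Jgen, dS_Jgen,
      dX_Jb hκ, dP_Jb hκ, dS_Jb hκ, Jboost, P0gen_eq, sub_neg_eq_add] <;>
    (try field_simp) <;> (try ring)

lemma pb_Jb_J {κ : ℝ} (hκ : 0 < κ) (c a b : Fin 3) (γ : Phase) :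
    pb (Jboost κ c) (Jgen a b) γ
      = -((if a = c then 1 else 0) * Jboost κ b γ
          - (if b = c then 1 else 0) * Jboost κ a γ) := by
  rw [pb_antisymm, pb_J_Jb hκ]

set_option maxHeartbeats 2000000 in
lemma pb_Jb_Jb_01 {κ : ℝ} (hκ : 0 < κ) (γ : Phase) :
    pb (Jboost κ 0) (Jboost κ 1) γ = -Jgen 0 1 γ := by
  have hE := (Ee_pos hκ γ).ne'
  have hD := (D_pos hκ γ).ne'
  have hE2 : Ee κ γ ^ 2 = κ ^ 2
      + (γ.2.1 0 * γ.2.1 0 + γ.2.1 1 * γ.2.1 1 + γ.2.1 2 * γ.2.1 2) := by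
    rw [Ee_sq hκ γ]; simp [dot3, Fin.sum_univ_three]
  simp [pb, dot3, cross3, Fin.sum_univ_three, dX_Jb hκ, dP_Jb hκ, dS_Jb hκ,
    Jgen, P0gen_eq, sub_neg_eq_add]
  field_simp
  linear_combination (-γ.2.2 2) * hE2

set_option maxHeartbeats 2000000 in
set_option maxHeartbeats 2000000 in
lemma pb_Jb_Jb_02 {κ : ℝ} (hκ : 0 < κ) (γ : Phase) :
    pb (Jboost κ 0) (Jboost κ 2) γ = -Jgen 0 2 γ := by
  have hE := (Ee_pos hκ γ).ne'
  have hD := (D_pos hκ γ).ne'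
  have hE2 : Ee κ γ ^ 2 = κ ^ 2
      + (γ.2.1 0 * γ.2.1 0 + γ.2.1 1 * γ.2.1 1 + γ.2.1 2 * γ.2.1 2) := by
    rw [Ee_sq hκ γ]; simp [dot3, Fin.sum_univ_three]
  simp [pb, dot3, cross3, Fin.sum_univ_three, dX_Jb hκ, dP_Jb hκ, dS_Jb hκ,
    Jgen, P0gen_eq, sub_neg_eq_add]
  field_simp
  linear_combination (γ.2.2 1) * hE2

set_option maxHeartbeats 2000000 in
set_option maxHeartbeats 2000000 in
lemma pb_Jb_Jb_12 {κ : ℝ} (hκ : 0 < κ) (γ : Phase) :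
    pb (Jboost κ 1) (Jboost κ 2) γ = -Jgen 1 2 γ := by
  have hE := (Ee_pos hκ γ).ne'
  have hD := (D_pos hκ γ).ne'
  have hE2 : Ee κ γ ^ 2 = κ ^ 2
      + (γ.2.1 0 * γ.2.1 0 + γ.2.1 1 * γ.2.1 1 + γ.2.1 2 * γ.2.1 2) := by
    rw [Ee_sq hκ γ]; simp [dot3, Fin.sum_univ_three]
  simp [pb, dot3, cross3, Fin.sum_univ_three, dX_Jb hκ, dP_Jb hκ, dS_Jb hκ,
    Jgen, P0gen_eq, sub_neg_eq_add]
  field_simp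
  linear_combination (-γ.2.2 0) * hE2


lemma Jgen_self (a : Fin 3) (γ : Phase) : Jgen a a γ = 0 := by
  fin_cases a <;> simp [Jgen, Fin.sum_univ_three]

lemma Jgen_swap (a b : Fin 3) (γ : Phase) : Jgen b a γ = -Jgen a b γ := by
  fin_cases a <;> fin_cases b <;> simp [Jgen, Fin.sum_univ_three] <;> ring

lemma pb_self (f : Phase → ℝ) (γ : Phase) : pb f f γ = 0 := by
  have := pb_antisymm f f γ; linarith

lemma pb_Jb_Jb {κ : ℝ} (hκ : 0 < κ) (a b : Fin 3) (γ : Phase) :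
    pb (Jboost κ a) (Jboost κ b) γ = -Jgen a b γ := by
  fin_cases a <;> fin_cases b
  · rw [pb_self, Jgen_self, neg_zero]
  · exact pb_Jb_Jb_01 hκ γ
  · exact pb_Jb_Jb_02 hκ γ
  · show pb (Jboost κ 1) (Jboost κ 0) γ = -Jgen 1 0 γ
    rw [pb_antisymm, pb_Jb_Jb_01 hκ, Jgen_swap 0 1]
  · rw [pb_self, Jgen_self, neg_zero]
  · exact pb_Jb_Jb_12 hκ γ
  · show pb (Jboost κ 2) (Jboost κ 0) γ = -Jgen 2 0 γ
    rw [pb_antisymm, pb_Jb_Jb_02 hκ, Jgen_swap 0 2]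
  · show pb (Jboost κ 2) (Jboost κ 1) γ = -Jgen 2 1 γ
    rw [pb_antisymm, pb_Jb_Jb_12 hκ, Jgen_swap 1 2]
  · rw [pb_self, Jgen_self, neg_zero]


lemma Jgen_10 (γ : Phase) : Jgen 1 0 γ = -Jgen 0 1 γ := Jgen_swap 0 1 γ
lemma Jgen_20 (γ : Phase) : Jgen 2 0 γ = -Jgen 0 2 γ := Jgen_swap 0 2 γ
lemma Jgen_21 (γ : Phase) : Jgen 2 1 γ = -Jgen 1 2 γ := Jgen_swap 1 2 γ

set_option maxHeartbeats 4000000 in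
theorem statement14 (κ : ℝ) (hκ : 0 < κ) :
    (∀ μ ν : Fin 4, ∀ γ : Phase, pb (P4 κ μ) (P4 κ ν) γ = 0) ∧
    (∀ μ ν ρ : Fin 4, ∀ γ : Phase,
      pb (J4 κ μ ν) (P4 κ ρ) γ = eta4 μ ρ * P4 κ ν γ - eta4 ν ρ * P4 κ μ γ) ∧
    (∀ μ ν ρ σ : Fin 4, ∀ γ : Phase,
      pb (J4 κ μ ν) (J4 κ ρ σ) γ =
        eta4 μ ρ * J4 κ ν σ γ - eta4 ν ρ * J4 κ μ σ γ
        - eta4 μ σ * J4 κ ν ρ γ + eta4 ν σ * J4 κ μ ρ γ) := by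
  refine ⟨?_, ?_, ?_⟩
  · intro μ ν γ
    fin_cases μ <;> fin_cases ν <;>
      simp [P4, pb_P_P, pb_P0_P hκ, pb_P_P0 hκ, pb_P0_P0]
  · intro μ ν ρ γ
    fin_cases μ <;> fin_cases ν <;> fin_cases ρ <;>
      simp [P4, J4, eta4, pb_zero_left, pb_neg_left, pb_J_P, pb_J_P0 hκ, pb_Jb_P hκ,
        pb_Jb_P0 hκ, pb_P_P, pb_P0_P hκ, pb_P_P0 hκ, pb_P0_P0, Pgen, P0gen_eq] <;>
      (try ring)
  · intro μ ν ρ σ γ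
    fin_cases μ <;> fin_cases ν <;> fin_cases ρ <;> fin_cases σ <;>
      simp [J4, eta4, pb_zero_left, pb_zero_right, pb_neg_left, pb_neg_right, pb_self,
        pb_J_J, pb_J_Jb hκ, pb_Jb_J hκ, pb_Jb_Jb hκ, Jgen_self, Jgen_10, Jgen_20,
        Jgen_21] <;>
      (try ring)
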